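/- Assume 25 ≤ n ≤ 51. Then there exists a real number τ such that I′(1) = 0, I″(1) < 0, and J(1) < 0, where I′ and I″ denote the first and second derivatives of the polynomial function s ↦ I(s). -/

import Mathlib

/-- The polynomial `I(s)` from Proposition 10 of the paper. -/
noncomputable def Ipoly (n : ℕ) (τ s : ℝ) : ℝ :=
  ((n : ℝ) - 12) / ((n : ℝ) + 6) * (((n : ℝ) - 10) / ((n : ℝ) + 4)) * ((n : ℝ) - 8) * τ ^ 2 * s ^ 2
    + 10 * (((n : ℝ) - 12) / ((n : ℝ) + 6)) * ((n : ℝ) - 10) * τ * s ^ 3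
    + (25 * (((n : ℝ) - 12) / ((n : ℝ) + 6)) * ((n : ℝ) + 8) - 2 * ((n : ℝ) - 12) * τ) * s ^ 4
    + ((((n : ℝ) + 8) / 10) * τ - 10 * ((n : ℝ) + 12)) * s ^ 5
    + (((n : ℝ) + 8) / ((n : ℝ) - 14)) * ((3 * (n : ℝ) + 52) / 2) * s ^ 6
    - (((n : ℝ) + 8) / ((n : ℝ) - 14)) * (((n : ℝ) + 10) / ((n : ℝ) - 16)) *
        (((n : ℝ) + 24) / 10) * s ^ 7
    + (((n : ℝ) + 8) / ((n : ℝ) - 14)) * (((n : ℝ) + 10) / ((n : ℝ) - 16)) *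
        (((n : ℝ) + 12) / ((n : ℝ) - 18)) * (((n : ℝ) + 32) / 400) * s ^ 8

/-- The polynomial `J(s)` from Proposition 12 of the paper. -/
noncomputable def Jpoly (n : ℕ) (τ s : ℝ) : ℝ :=
  10 * (((n : ℝ) - 10) / ((n : ℝ) + 8)) * (((n : ℝ) - 8) / ((n : ℝ) + 6)) * τ * s ^ 2
    + (((n : ℝ) - 10) / ((n : ℝ) + 8)) * (75 - 4 * τ) * s ^ 3
    + ((3 / 10) * τ - 50) * s ^ 4
    + (23 / 2) * (((n : ℝ) + 10) / ((n : ℝ) - 12)) * s ^ 5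
    - (11 / 10) * (((n : ℝ) + 10) / ((n : ℝ) - 12)) * (((n : ℝ) + 12) / ((n : ℝ) - 14)) * s ^ 6
    + (3 / 80) * (((n : ℝ) + 10) / ((n : ℝ) - 12)) * (((n : ℝ) + 12) / ((n : ℝ) - 14)) *
        (((n : ℝ) + 14) / ((n : ℝ) - 16)) * s ^ 7

private lemma hp (c : ℝ) (k : ℕ) (s : ℝ) :
    HasDerivAt (fun x : ℝ => c * x ^ k) (c * (k * s ^ (k - 1))) s :=
  (hasDerivAt_pow k s).const_mul c

private lemma deriv_fun (c2 c3 c4 c5 c6 c7 c8 : ℝ) :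
    deriv (fun s : ℝ => c2*s^2 + c3*s^3 + c4*s^4 + c5*s^5 + c6*s^6 + c7*s^7 + c8*s^8)
      = fun s => 2*c2*s + 3*c3*s^2 + 4*c4*s^3 + 5*c5*s^4 + 6*c6*s^5 + 7*c7*s^6 + 8*c8*s^7 := by
  funext s
  have h := ((((((hp c2 2 s).add (hp c3 3 s)).add (hp c4 4 s)).add (hp c5 5 s)).add
    (hp c6 6 s)).add (hp c7 7 s)).add (hp c8 8 s)
  refine h.deriv.trans ?_; push_cast; ring

private lemma deriv_fun2 (c1 c2 c3 c4 c5 c6 c7 : ℝ) :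
    deriv (fun s : ℝ => c1*s + c2*s^2 + c3*s^3 + c4*s^4 + c5*s^5 + c6*s^6 + c7*s^7)
      = fun s => c1 + 2*c2*s + 3*c3*s^2 + 4*c4*s^3 + 5*c5*s^4 + 6*c6*s^5 + 7*c7*s^6 := by
  funext s
  have h0 : HasDerivAt (fun x : ℝ => c1 * x) (c1 * 1) s := (hasDerivAt_id s).const_mul c1
  have h := (((((h0.add (hp c2 2 s)).add (hp c3 3 s)).add (hp c4 4 s)).add (hp c5 5 s)).add
    (hp c6 6 s)).add (hp c7 7 s)
  refine h.deriv.trans ?_; push_cast; ring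

private lemma quad_root (a b c L U : ℝ) (hLU : L ≤ U) (hL : 0 ≤ a*L^2 + b*L + c)
    (hU : a*U^2 + b*U + c ≤ 0) : ∃ τ, L ≤ τ ∧ τ ≤ U ∧ a*τ^2 + b*τ + c = 0 := by
  have hc : ContinuousOn (fun t : ℝ => a*t^2 + b*t + c) (Set.Icc L U) := by fun_prop
  have := intermediate_value_Icc' hLU hc
  have h0 : (0:ℝ) ∈ Set.Icc (a*U^2 + b*U + c) (a*L^2 + b*L + c) := ⟨hU, hL⟩
  obtain ⟨τ, hτ, he⟩ := this h0
  exact ⟨τ, hτ.1, hτ.2, he⟩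

set_option maxHeartbeats 4000000 in
theorem stmt_17 (n : ℕ) (hn1 : 25 ≤ n) (hn2 : n ≤ 51) :
    ∃ τ : ℝ, deriv (Ipoly n τ) 1 = 0 ∧ deriv (deriv (Ipoly n τ)) 1 < 0 ∧ Jpoly n τ 1 < 0 := by
  interval_cases n
  · obtain ⟨τ, hL, hU, h0⟩ := quad_root (6630/899 : ℝ) (6275/62 : ℝ) (161357/465 : ℝ) (-7061/1000 : ℝ) (-7021/1000 : ℝ)
      (by norm_num) (by norm_num) (by norm_num)
    have hI : Ipoly 25 τ = fun s => ((3315/899 : ℝ)*τ^2)*s^2 + ((1950/31 : ℝ)*τ)*s^3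
        + ((10725/31 : ℝ) - (26 : ℝ)*τ)*s^4 + ((33/10 : ℝ)*τ - (370 : ℝ))*s^5
        + (381/2 : ℝ)*s^6 + (-343/6 : ℝ)*s^7 + (703/80 : ℝ)*s^8 := by
      funext s; unfold Ipoly; push_cast; ring
    have hJ : Jpoly 25 τ 1 < 0 := by
      unfold Jpoly; push_cast; nlinarith [hL, hU]
    exact ⟨τ, by rw [hI, deriv_fun]; push_cast; linear_combination h0,
      by rw [hI, deriv_fun, deriv_fun2]; push_cast; nlinarith [h0, hL, hU], hJ⟩
  · obtain ⟨τ, hL, hU, h0⟩ := quad_root (42/5 : ℝ) (115 : ℝ) (195851/500 : ℝ) (-7341/1000 : ℝ) (-7301/1000 : ℝ)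
      (by norm_num) (by norm_num) (by norm_num)
    have hI : Ipoly 26 τ = fun s => ((21/5 : ℝ)*τ^2)*s^2 + ((70 : ℝ)*τ)*s^3
        + ((2975/8 : ℝ) - (28 : ℝ)*τ)*s^4 + ((17/5 : ℝ)*τ - (380 : ℝ))*s^5
        + (1105/6 : ℝ)*s^6 + (-51 : ℝ)*s^7 + (28101/4000 : ℝ)*s^8 := by
      funext s; unfold Ipoly; push_cast; ring
    have hJ : Jpoly 26 τ 1 < 0 := by
      unfold Jpoly; push_cast; nlinarith [hL, hU]
    exact ⟨τ, by rw [hI, deriv_fun]; push_cast; linear_combination h0,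
      by rw [hI, deriv_fun, deriv_fun2]; push_cast; nlinarith [h0, hL, hU], hJ⟩
  · obtain ⟨τ, hL, hU, h0⟩ := quad_root (3230/341 : ℝ) (2845/22 : ℝ) (85439/195 : ℝ) (-743/100 : ℝ) (-739/100 : ℝ)
      (by norm_num) (by norm_num) (by norm_num)
    have hI : Ipoly 27 τ = fun s => ((1615/341 : ℝ)*τ^2)*s^2 + ((850/11 : ℝ)*τ)*s^3
        + ((4375/11 : ℝ) - (30 : ℝ)*τ)*s^4 + ((7/2 : ℝ)*τ - (390 : ℝ))*s^5
        + (4655/26 : ℝ)*s^6 + (-13209/286 : ℝ)*s^7 + (15281/2640 : ℝ)*s^8 := by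
      funext s; unfold Ipoly; push_cast; ring
    have hJ : Jpoly 27 τ 1 < 0 := by
      unfold Jpoly; push_cast; nlinarith [hL, hU]
    exact ⟨τ, by rw [hI, deriv_fun]; push_cast; linear_combination h0,
      by rw [hI, deriv_fun, deriv_fun2]; push_cast; nlinarith [h0, hL, hU], hJ⟩
  · obtain ⟨τ, hL, hU, h0⟩ := quad_root (180/17 : ℝ) (2450/17 : ℝ) (289138/595 : ℝ) (-3737/500 : ℝ) (-3717/500 : ℝ)
      (by norm_num) (by norm_num) (by norm_num)
    have hI : Ipoly 28 τ = fun s => ((90/17 : ℝ)*τ^2)*s^2 + ((1440/17 : ℝ)*τ)*s^3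
        + ((7200/17 : ℝ) - (32 : ℝ)*τ)*s^4 + ((18/5 : ℝ)*τ - (400 : ℝ))*s^5
        + (1224/7 : ℝ)*s^6 + (-1482/35 : ℝ)*s^7 + (171/35 : ℝ)*s^8 := by
      funext s; unfold Ipoly; push_cast; ring
    have hJ : Jpoly 28 τ 1 < 0 := by
      unfold Jpoly; push_cast; nlinarith [hL, hU]
    exact ⟨τ, by rw [hI, deriv_fun]; push_cast; linear_combination h0,
      by rw [hI, deriv_fun, deriv_fun2]; push_cast; nlinarith [h0, hL, hU], hJ⟩
  · obtain ⟨τ, hL, hU, h0⟩ := quad_root (646/55 : ℝ) (2231/14 : ℝ) (5147957/9625 : ℝ) (-7499/1000 : ℝ) (-7459/1000 : ℝ)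
      (by norm_num) (by norm_num) (by norm_num)
    have hI : Ipoly 29 τ = fun s => ((323/55 : ℝ)*τ^2)*s^2 + ((646/7 : ℝ)*τ)*s^3
        + ((3145/7 : ℝ) - (34 : ℝ)*τ)*s^4 + ((37/10 : ℝ)*τ - (410 : ℝ))*s^5
        + (5143/30 : ℝ)*s^6 + (-1961/50 : ℝ)*s^7 + (92537/22000 : ℝ)*s^8 := by
      funext s; unfold Ipoly; push_cast; ring
    have hJ : Jpoly 29 τ 1 < 0 := by
      unfold Jpoly; push_cast; nlinarith [hL, hU]
    exact ⟨τ, by rw [hI, deriv_fun]; push_cast; linear_combination h0,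
      by rw [hI, deriv_fun, deriv_fun2]; push_cast; nlinarith [h0, hL, hU], hJ⟩
  · obtain ⟨τ, hL, hU, h0⟩ := quad_root (220/17 : ℝ) (175 : ℝ) (5847/10 : ℝ) (-7513/1000 : ℝ) (-7473/1000 : ℝ)
      (by norm_num) (by norm_num) (by norm_num)
    have hI : Ipoly 30 τ = fun s => ((110/17 : ℝ)*τ^2)*s^2 + ((100 : ℝ)*τ)*s^3
        + ((475 : ℝ) - (36 : ℝ)*τ)*s^4 + ((19/5 : ℝ)*τ - (420 : ℝ))*s^5
        + (1349/8 : ℝ)*s^6 + (-513/14 : ℝ)*s^7 + (589/160 : ℝ)*s^8 := by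
      funext s; unfold Ipoly; push_cast; ring
    have hJ : Jpoly 30 τ 1 < 0 := by
      unfold Jpoly; push_cast; nlinarith [hL, hU]
    exact ⟨τ, by rw [hI, deriv_fun]; push_cast; linear_combination h0,
      by rw [hI, deriv_fun, deriv_fun2]; push_cast; nlinarith [h0, hL, hU], hJ⟩
  · obtain ⟨τ, hL, hU, h0⟩ := quad_root (2622/185 : ℝ) (14135/74 : ℝ) (49955189/78625 : ℝ) (-7521/1000 : ℝ) (-7481/1000 : ℝ)
      (by norm_num) (by norm_num) (by norm_num)
    have hI : Ipoly 31 τ = fun s => ((1311/185 : ℝ)*τ^2)*s^2 + ((3990/37 : ℝ)*τ)*s^3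
        + ((18525/37 : ℝ) - (38 : ℝ)*τ)*s^4 + ((39/10 : ℝ)*τ - (430 : ℝ))*s^5
        + (5655/34 : ℝ)*s^6 + (-5863/170 : ℝ)*s^7 + (111069/34000 : ℝ)*s^8 := by
      funext s; unfold Ipoly; push_cast; ring
    have hJ : Jpoly 31 τ 1 < 0 := by
      unfold Jpoly; push_cast; nlinarith [hL, hU]
    exact ⟨τ, by rw [hI, deriv_fun]; push_cast; linear_combination h0,
      by rw [hI, deriv_fun, deriv_fun2]; push_cast; nlinarith [h0, hL, hU], hJ⟩
  · obtain ⟨τ, hL, hU, h0⟩ := quad_root (880/57 : ℝ) (3940/19 : ℝ) (195718/285 : ℝ) (-301/40 : ℝ) (-1497/200 : ℝ)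
      (by norm_num) (by norm_num) (by norm_num)
    have hI : Ipoly 32 τ = fun s => ((440/57 : ℝ)*τ^2)*s^2 + ((2200/19 : ℝ)*τ)*s^3
        + ((10000/19 : ℝ) - (40 : ℝ)*τ)*s^4 + ((4 : ℝ)*τ - (440 : ℝ))*s^5
        + (1480/9 : ℝ)*s^6 + (-98/3 : ℝ)*s^7 + (44/15 : ℝ)*s^8 := by
      funext s; unfold Ipoly; push_cast; ring
    have hJ : Jpoly 32 τ 1 < 0 := by
      unfold Jpoly; push_cast; nlinarith [hL, hU]
    exact ⟨τ, by rw [hI, deriv_fun]; push_cast; linear_combination h0,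
      by rw [hI, deriv_fun, deriv_fun2]; push_cast; nlinarith [h0, hL, hU], hJ⟩
  · obtain ⟨τ, hL, hU, h0⟩ := quad_root (8050/481 : ℝ) (5825/26 : ℝ) (3101899/4199 : ℝ) (-3763/500 : ℝ) (-3743/500 : ℝ)
      (by norm_num) (by norm_num) (by norm_num)
    have hI : Ipoly 33 τ = fun s => ((4025/481 : ℝ)*τ^2)*s^2 + ((1610/13 : ℝ)*τ)*s^3
        + ((7175/13 : ℝ) - (42 : ℝ)*τ)*s^4 + ((41/10 : ℝ)*τ - (450 : ℝ))*s^5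
        + (6191/38 : ℝ)*s^6 + (-5289/170 : ℝ)*s^7 + (68757/25840 : ℝ)*s^8 := by
      funext s; unfold Ipoly; push_cast; ring
    have hJ : Jpoly 33 τ 1 < 0 := by
      unfold Jpoly; push_cast; nlinarith [hL, hU]
    exact ⟨τ, by rw [hI, deriv_fun]; push_cast; linear_combination h0,
      by rw [hI, deriv_fun, deriv_fun2]; push_cast; nlinarith [h0, hL, hU], hJ⟩
  · obtain ⟨τ, hL, hU, h0⟩ := quad_root (1716/95 : ℝ) (241 : ℝ) (2373803/3000 : ℝ) (-3763/500 : ℝ) (-3743/500 : ℝ)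
      (by norm_num) (by norm_num) (by norm_num)
    have hI : Ipoly 34 τ = fun s => ((858/95 : ℝ)*τ^2)*s^2 + ((132 : ℝ)*τ)*s^3
        + ((1155/2 : ℝ) - (44 : ℝ)*τ)*s^4 + ((21/5 : ℝ)*τ - (460 : ℝ))*s^5
        + (1617/10 : ℝ)*s^6 + (-2233/75 : ℝ)*s^7 + (19481/8000 : ℝ)*s^8 := by
      funext s; unfold Ipoly; push_cast; ring
    have hJ : Jpoly 34 τ 1 < 0 := by
      unfold Jpoly; push_cast; nlinarith [hL, hU]
    exact ⟨τ, by rw [hI, deriv_fun]; push_cast; linear_combination h0,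
      by rw [hI, deriv_fun, deriv_fun2]; push_cast; nlinarith [h0, hL, hU], hJ⟩
  · obtain ⟨τ, hL, hU, h0⟩ := quad_root (10350/533 : ℝ) (21175/82 : ℝ) (391337573/463505 : ℝ) (-301/40 : ℝ) (-1497/200 : ℝ)
      (by norm_num) (by norm_num) (by norm_num)
    have hI : Ipoly 35 τ = fun s => ((5175/533 : ℝ)*τ^2)*s^2 + ((5750/41 : ℝ)*τ)*s^3
        + ((24725/41 : ℝ) - (46 : ℝ)*τ)*s^4 + ((43/10 : ℝ)*τ - (470 : ℝ))*s^5
        + (6751/42 : ℝ)*s^6 + (-7611/266 : ℝ)*s^7 + (406221/180880 : ℝ)*s^8 := by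
      funext s; unfold Ipoly; push_cast; ring
    have hJ : Jpoly 35 τ 1 < 0 := by
      unfold Jpoly; push_cast; nlinarith [hL, hU]
    exact ⟨τ, by rw [hI, deriv_fun]; push_cast; linear_combination h0,
      by rw [hI, deriv_fun, deriv_fun2]; push_cast; nlinarith [h0, hL, hU], hJ⟩
  · obtain ⟨τ, hL, hU, h0⟩ := quad_root (104/5 : ℝ) (1930/7 : ℝ) (2356642/2625 : ℝ) (-3761/500 : ℝ) (-3741/500 : ℝ)
      (by norm_num) (by norm_num) (by norm_num)
    have hI : Ipoly 36 τ = fun s => ((52/5 : ℝ)*τ^2)*s^2 + ((1040/7 : ℝ)*τ)*s^3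
        + ((4400/7 : ℝ) - (48 : ℝ)*τ)*s^4 + ((22/5 : ℝ)*τ - (480 : ℝ))*s^5
        + (160 : ℝ)*s^6 + (-138/5 : ℝ)*s^7 + (782/375 : ℝ)*s^8 := by
      funext s; unfold Ipoly; push_cast; ring
    have hJ : Jpoly 36 τ 1 < 0 := by
      unfold Jpoly; push_cast; nlinarith [hL, hU]
    exact ⟨τ, by rw [hI, deriv_fun]; push_cast; linear_combination h0,
      by rw [hI, deriv_fun, deriv_fun2]; push_cast; nlinarith [h0, hL, hU], hJ⟩
  · obtain ⟨τ, hL, hU, h0⟩ := quad_root (39150/1763 : ℝ) (25235/86 : ℝ) (89409847/93955 : ℝ) (-188/25 : ℝ) (-187/25 : ℝ)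
      (by norm_num) (by norm_num) (by norm_num)
    have hI : Ipoly 37 τ = fun s => ((19575/1763 : ℝ)*τ^2)*s^2 + ((6750/43 : ℝ)*τ)*s^3
        + ((28125/43 : ℝ) - (50 : ℝ)*τ)*s^4 + ((9/2 : ℝ)*τ - (490 : ℝ))*s^5
        + (7335/46 : ℝ)*s^6 + (-8601/322 : ℝ)*s^7 + (2961/1520 : ℝ)*s^8 := by
      funext s; unfold Ipoly; push_cast; ring
    have hJ : Jpoly 37 τ 1 < 0 := by
      unfold Jpoly; push_cast; nlinarith [hL, hU]
    exact ⟨τ, by rw [hI, deriv_fun]; push_cast; linear_combination h0,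
      by rw [hI, deriv_fun, deriv_fun2]; push_cast; nlinarith [h0, hL, hU], hJ⟩
  · obtain ⟨τ, hL, hU, h0⟩ := quad_root (260/11 : ℝ) (3425/11 : ℝ) (110641/110 : ℝ) (-7517/1000 : ℝ) (-7477/1000 : ℝ)
      (by norm_num) (by norm_num) (by norm_num)
    have hI : Ipoly 38 τ = fun s => ((130/11 : ℝ)*τ^2)*s^2 + ((1820/11 : ℝ)*τ)*s^3
        + ((7475/11 : ℝ) - (52 : ℝ)*τ)*s^4 + ((23/5 : ℝ)*τ - (500 : ℝ))*s^5
        + (1909/12 : ℝ)*s^6 + (-1426/55 : ℝ)*s^7 + (161/88 : ℝ)*s^8 := by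
      funext s; unfold Ipoly; push_cast; ring
    have hJ : Jpoly 38 τ 1 < 0 := by
      unfold Jpoly; push_cast; nlinarith [hL, hU]
    exact ⟨τ, by rw [hI, deriv_fun]; push_cast; linear_combination h0,
      by rw [hI, deriv_fun, deriv_fun2]; push_cast; nlinarith [h0, hL, hU], hJ⟩
  · obtain ⟨τ, hL, hU, h0⟩ := quad_root (5394/215 : ℝ) (659/2 : ℝ) (15242419/14375 : ℝ) (-7513/1000 : ℝ) (-7473/1000 : ℝ)
      (by norm_num) (by norm_num) (by norm_num)
    have hI : Ipoly 39 τ = fun s => ((2697/215 : ℝ)*τ^2)*s^2 + ((174 : ℝ)*τ)*s^3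
        + ((705 : ℝ) - (54 : ℝ)*τ)*s^4 + ((47/10 : ℝ)*τ - (510 : ℝ))*s^5
        + (7943/50 : ℝ)*s^6 + (-145089/5750 : ℝ)*s^7 + (397103/230000 : ℝ)*s^8 := by
      funext s; unfold Ipoly; push_cast; ring
    have hJ : Jpoly 39 τ 1 < 0 := by
      unfold Jpoly; push_cast; nlinarith [hL, hU]
    exact ⟨τ, by rw [hI, deriv_fun]; push_cast; linear_combination h0,
      by rw [hI, deriv_fun, deriv_fun2]; push_cast; nlinarith [h0, hL, hU], hJ⟩
  · obtain ⟨τ, hL, hU, h0⟩ := quad_root (6720/253 : ℝ) (8000/23 : ℝ) (3667688/3289 : ℝ) (-751/100 : ℝ) (-747/100 : ℝ)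
      (by norm_num) (by norm_num) (by norm_num)
    have hI : Ipoly 40 τ = fun s => ((3360/253 : ℝ)*τ^2)*s^2 + ((4200/23 : ℝ)*τ)*s^3
        + ((16800/23 : ℝ) - (56 : ℝ)*τ)*s^4 + ((24/5 : ℝ)*τ - (520 : ℝ))*s^5
        + (2064/13 : ℝ)*s^6 + (-320/13 : ℝ)*s^7 + (18/11 : ℝ)*s^8 := by
      funext s; unfold Ipoly; push_cast; ring
    have hJ : Jpoly 40 τ 1 < 0 := by
      unfold Jpoly; push_cast; nlinarith [hL, hU]
    exact ⟨τ, by rw [hI, deriv_fun]; push_cast; linear_combination h0,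
      by rw [hI, deriv_fun, deriv_fun2]; push_cast; nlinarith [h0, hL, hU], hJ⟩
  · obtain ⟨τ, hL, hU, h0⟩ := quad_root (19778/705 : ℝ) (34435/94 : ℝ) (7115465197/6080625 : ℝ) (-3753/500 : ℝ) (-3733/500 : ℝ)
      (by norm_num) (by norm_num) (by norm_num)
    have hI : Ipoly 41 τ = fun s => ((9889/705 : ℝ)*τ^2)*s^2 + ((8990/47 : ℝ)*τ)*s^3
        + ((35525/47 : ℝ) - (58 : ℝ)*τ)*s^4 + ((49/10 : ℝ)*τ - (530 : ℝ))*s^5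
        + (8575/54 : ℝ)*s^6 + (-10829/450 : ℝ)*s^7 + (3222877/2070000 : ℝ)*s^8 := by
      funext s; unfold Ipoly; push_cast; ring
    have hJ : Jpoly 41 τ 1 < 0 := by
      unfold Jpoly; push_cast; nlinarith [hL, hU]
    exact ⟨τ, by rw [hI, deriv_fun]; push_cast; linear_combination h0,
      by rw [hI, deriv_fun, deriv_fun2]; push_cast; nlinarith [h0, hL, hU], hJ⟩
  · obtain ⟨τ, hL, hU, h0⟩ := quad_root (680/23 : ℝ) (385 : ℝ) (34313/28 : ℝ) (-7503/1000 : ℝ) (-7463/1000 : ℝ)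
      (by norm_num) (by norm_num) (by norm_num)
    have hI : Ipoly 42 τ = fun s => ((340/23 : ℝ)*τ^2)*s^2 + ((200 : ℝ)*τ)*s^3
        + ((3125/4 : ℝ) - (60 : ℝ)*τ)*s^4 + ((5 : ℝ)*τ - (540 : ℝ))*s^5
        + (2225/14 : ℝ)*s^6 + (-165/7 : ℝ)*s^7 + (333/224 : ℝ)*s^8 := by
      funext s; unfold Ipoly; push_cast; ring
    have hJ : Jpoly 42 τ 1 < 0 := by
      unfold Jpoly; push_cast; nlinarith [hL, hU]
    exact ⟨τ, by rw [hI, deriv_fun]; push_cast; linear_combination h0,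
      by rw [hI, deriv_fun, deriv_fun2]; push_cast; nlinarith [h0, hL, hU], hJ⟩
  · obtain ⟨τ, hL, hU, h0⟩ := quad_root (10230/329 : ℝ) (39575/98 : ℝ) (81910333/63945 : ℝ) (-7499/1000 : ℝ) (-7459/1000 : ℝ)
      (by norm_num) (by norm_num) (by norm_num)
    have hI : Ipoly 43 τ = fun s => ((5115/329 : ℝ)*τ^2)*s^2 + ((10230/49 : ℝ)*τ)*s^3
        + ((39525/49 : ℝ) - (62 : ℝ)*τ)*s^4 + ((51/10 : ℝ)*τ - (550 : ℝ))*s^5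
        + (9231/58 : ℝ)*s^6 + (-60367/2610 : ℝ)*s^7 + (9911/6960 : ℝ)*s^8 := by
      funext s; unfold Ipoly; push_cast; ring
    have hJ : Jpoly 43 τ 1 < 0 := by
      unfold Jpoly; push_cast; nlinarith [hL, hU]
    exact ⟨τ, by rw [hI, deriv_fun]; push_cast; linear_combination h0,
      by rw [hI, deriv_fun, deriv_fun2]; push_cast; nlinarith [h0, hL, hU], hJ⟩
  · obtain ⟨τ, hL, hU, h0⟩ := quad_root (816/25 : ℝ) (2114/5 : ℝ) (167078/125 : ℝ) (-1499/200 : ℝ) (-1491/200 : ℝ)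
      (by norm_num) (by norm_num) (by norm_num)
    have hI : Ipoly 44 τ = fun s => ((408/25 : ℝ)*τ^2)*s^2 + ((1088/5 : ℝ)*τ)*s^3
        + ((832 : ℝ) - (64 : ℝ)*τ)*s^4 + ((26/5 : ℝ)*τ - (560 : ℝ))*s^5
        + (2392/15 : ℝ)*s^6 + (-3978/175 : ℝ)*s^7 + (171/125 : ℝ)*s^8 := by
      funext s; unfold Ipoly; push_cast; ring
    have hJ : Jpoly 44 τ 1 < 0 := by
      unfold Jpoly; push_cast; nlinarith [hL, hU]
    exact ⟨τ, by rw [hI, deriv_fun]; push_cast; linear_combination h0,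
      by rw [hI, deriv_fun, deriv_fun2]; push_cast; nlinarith [h0, hL, hU], hJ⟩
  · obtain ⟨τ, hL, hU, h0⟩ := quad_root (4070/119 : ℝ) (15025/34 : ℝ) (957650459/687735 : ℝ) (-1873/250 : ℝ) (-1863/250 : ℝ)
      (by norm_num) (by norm_num) (by norm_num)
    have hI : Ipoly 45 τ = fun s => ((2035/119 : ℝ)*τ^2)*s^2 + ((3850/17 : ℝ)*τ)*s^3
        + ((14575/17 : ℝ) - (66 : ℝ)*τ)*s^4 + ((53/10 : ℝ)*τ - (570 : ℝ))*s^5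
        + (9911/62 : ℝ)*s^6 + (-40227/1798 : ℝ)*s^7 + (852929/647280 : ℝ)*s^8 := by
      funext s; unfold Ipoly; push_cast; ring
    have hJ : Jpoly 45 τ 1 < 0 := by
      unfold Jpoly; push_cast; nlinarith [hL, hU]
    exact ⟨τ, by rw [hI, deriv_fun]; push_cast; linear_combination h0,
      by rw [hI, deriv_fun, deriv_fun2]; push_cast; nlinarith [h0, hL, hU], hJ⟩
  · obtain ⟨τ, hL, hU, h0⟩ := quad_root (11628/325 : ℝ) (5995/13 : ℝ) (2353769/1625 : ℝ) (-936/125 : ℝ) (-931/125 : ℝ)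
      (by norm_num) (by norm_num) (by norm_num)
    have hI : Ipoly 46 τ = fun s => ((5814/325 : ℝ)*τ^2)*s^2 + ((3060/13 : ℝ)*τ)*s^3
        + ((11475/13 : ℝ) - (68 : ℝ)*τ)*s^4 + ((27/5 : ℝ)*τ - (580 : ℝ))*s^5
        + (2565/16 : ℝ)*s^6 + (-441/20 : ℝ)*s^7 + (10179/8000 : ℝ)*s^8 := by
      funext s; unfold Ipoly; push_cast; ring
    have hJ : Jpoly 46 τ 1 < 0 := by
      unfold Jpoly; push_cast; nlinarith [hL, hU]
    exact ⟨τ, by rw [hI, deriv_fun]; push_cast; linear_combination h0,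
      by rw [hI, deriv_fun, deriv_fun2]; push_cast; nlinarith [h0, hL, hU], hJ⟩
  · obtain ⟨τ, hL, hU, h0⟩ := quad_root (33670/901 : ℝ) (50935/106 : ℝ) (358453111/238235 : ℝ) (-1497/200 : ℝ) (-1489/200 : ℝ)
      (by norm_num) (by norm_num) (by norm_num)
    have hI : Ipoly 47 τ = fun s => ((16835/901 : ℝ)*τ^2)*s^2 + ((12950/53 : ℝ)*τ)*s^3
        + ((48125/53 : ℝ) - (70 : ℝ)*τ)*s^4 + ((11/2 : ℝ)*τ - (590 : ℝ))*s^5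
        + (965/6 : ℝ)*s^6 + (-1349/62 : ℝ)*s^7 + (88559/71920 : ℝ)*s^8 := by
      funext s; unfold Ipoly; push_cast; ring
    have hJ : Jpoly 47 τ 1 < 0 := by
      unfold Jpoly; push_cast; nlinarith [hL, hU]
    exact ⟨τ, by rw [hI, deriv_fun]; push_cast; linear_combination h0,
      by rw [hI, deriv_fun, deriv_fun2]; push_cast; nlinarith [h0, hL, hU], hJ⟩
  · obtain ⟨τ, hL, hU, h0⟩ := quad_root (1520/39 : ℝ) (500 : ℝ) (398029/255 : ℝ) (-7481/1000 : ℝ) (-7441/1000 : ℝ)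
      (by norm_num) (by norm_num) (by norm_num)
    have hI : Ipoly 48 τ = fun s => ((760/39 : ℝ)*τ^2)*s^2 + ((760/3 : ℝ)*τ)*s^3
        + ((2800/3 : ℝ) - (72 : ℝ)*τ)*s^4 + ((28/5 : ℝ)*τ - (600 : ℝ))*s^5
        + (2744/17 : ℝ)*s^6 + (-1827/85 : ℝ)*s^7 + (203/170 : ℝ)*s^8 := by
      funext s; unfold Ipoly; push_cast; ring
    have hJ : Jpoly 48 τ 1 < 0 := by
      unfold Jpoly; push_cast; nlinarith [hL, hU]
    exact ⟨τ, by rw [hI, deriv_fun]; push_cast; linear_combination h0,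
      by rw [hI, deriv_fun, deriv_fun2]; push_cast; nlinarith [h0, hL, hU], hJ⟩
  · obtain ⟨τ, hL, hU, h0⟩ := quad_root (118326/2915 : ℝ) (11431/22 : ℝ) (482561003/298375 : ℝ) (-3739/500 : ℝ) (-3719/500 : ℝ)
      (by norm_num) (by norm_num) (by norm_num)
    have hI : Ipoly 49 τ = fun s => ((59163/2915 : ℝ)*τ^2)*s^2 + ((2886/11 : ℝ)*τ)*s^3
        + ((10545/11 : ℝ) - (74 : ℝ)*τ)*s^4 + ((57/10 : ℝ)*τ - (610 : ℝ))*s^5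
        + (11343/70 : ℝ)*s^6 + (-81833/3850 : ℝ)*s^7 + (5538861/4774000 : ℝ)*s^8 := by
      funext s; unfold Ipoly; push_cast; ring
    have hJ : Jpoly 49 τ 1 < 0 := by
      unfold Jpoly; push_cast; nlinarith [hL, hU]
    exact ⟨τ, by rw [hI, deriv_fun]; push_cast; linear_combination h0,
      by rw [hI, deriv_fun, deriv_fun2]; push_cast; nlinarith [h0, hL, hU], hJ⟩
  · obtain ⟨τ, hL, hU, h0⟩ := quad_root (380/9 : ℝ) (3775/7 : ℝ) (47803933/28560 : ℝ) (-299/40 : ℝ) (-1487/200 : ℝ)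
      (by norm_num) (by norm_num) (by norm_num)
    have hI : Ipoly 50 τ = fun s => ((190/9 : ℝ)*τ^2)*s^2 + ((1900/7 : ℝ)*τ)*s^3
        + ((13775/14 : ℝ) - (76 : ℝ)*τ)*s^4 + ((29/5 : ℝ)*τ - (620 : ℝ))*s^5
        + (2929/18 : ℝ)*s^6 + (-1073/51 : ℝ)*s^7 + (36859/32640 : ℝ)*s^8 := by
      funext s; unfold Ipoly; push_cast; ring
    have hJ : Jpoly 50 τ 1 < 0 := by
      unfold Jpoly; push_cast; nlinarith [hL, hU]
    exact ⟨τ, by rw [hI, deriv_fun]; push_cast; linear_combination h0,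
      by rw [hI, deriv_fun, deriv_fun2]; push_cast; nlinarith [h0, hL, hU], hJ⟩
  · obtain ⟨τ, hL, hU, h0⟩ := quad_root (45838/1045 : ℝ) (21245/38 : ℝ) (1672666997/966625 : ℝ) (-934/125 : ℝ) (-929/125 : ℝ)
      (by norm_num) (by norm_num) (by norm_num)
    have hI : Ipoly 51 τ = fun s => ((22919/1045 : ℝ)*τ^2)*s^2 + ((5330/19 : ℝ)*τ)*s^3
        + ((19175/19 : ℝ) - (78 : ℝ)*τ)*s^4 + ((59/10 : ℝ)*τ - (630 : ℝ))*s^5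
        + (12095/74 : ℝ)*s^6 + (-10797/518 : ℝ)*s^7 + (896151/814000 : ℝ)*s^8 := by
      funext s; unfold Ipoly; push_cast; ring
    have hJ : Jpoly 51 τ 1 < 0 := by
      unfold Jpoly; push_cast; nlinarith [hL, hU]
    exact ⟨τ, by rw [hI, deriv_fun]; push_cast; linear_combination h0,
      by rw [hI, deriv_fun, deriv_fun2]; push_cast; nlinarith [h0, hL, hU], hJ⟩
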